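/- For any point x in a convex set C ⊆ ℝⁿ, the minimal face of C containing x equals the union of all closed segments [y,z] contained in C such that x lies in the open segment (y,z). -/

import Mathlib

open Set Metric RealInnerProductSpace

variable {E : Type*} [NormedAddCommGroup E] [NormedSpace ℝ E]

/-- A face of a convex set: a convex subset `F` of `C` such that any open segment of `C`
meeting `F` has both endpoints in `F`. -/
def IsFace (C F : Set E) : Prop := Convex ℝ F ∧ IsExtreme ℝ C F

/-- Dimension of a convex set: the dimension of its affine hull. -/
noncomputable def sdim (S : Set E) : ℕ := Module.finrank ℝ (affineSpan ℝ S).direction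

/-- The facial dimension signature: the set of dimensions of nonempty faces. -/
def faceDimSig (C : Set E) : Set ℕ :=
  {d | ∃ F : Set E, IsFace C F ∧ F.Nonempty ∧ sdim F = d}

/-- The minimal face of `C` containing `x`. -/
def minFace (C : Set E) (x : E) : Set E := ⋂₀ {F | IsFace C F ∧ x ∈ F}

private lemma aux_extreme {C : Set E} (hC : Convex ℝ C) {x u₁ u₂ : E}
    (hu₂ : u₂ ∈ C) {a ε : ℝ} (ha : 0 < a) (ha1 : a < 1)
    (hε : 0 < ε) (hv : x + ε • (x - (a • u₁ + (1 - a) • u₂)) ∈ C) :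
    ∃ ε' : ℝ, 0 < ε' ∧ x + ε' • (x - u₁) ∈ C := by
  have hden : (0:ℝ) < 1 + ε * (1 - a) := by nlinarith
  refine ⟨a * ε / (1 + ε * (1 - a)), by positivity, ?_⟩
  have key : x + (a * ε / (1 + ε * (1 - a))) • (x - u₁) =
      (1 / (1 + ε * (1 - a))) • (x + ε • (x - (a • u₁ + (1 - a) • u₂)))
        + (ε * (1 - a) / (1 + ε * (1 - a))) • u₂ := by
    match_scalars <;> (field_simp; try ring; try simp)
  rw [key]
  exact hC hv hu₂ (div_nonneg zero_le_one hden.le)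
    (div_nonneg (by nlinarith) hden.le)
    (by rw [← add_div, div_self hden.ne'])

theorem minFace_eq_union_segments {n : ℕ} (C : Set (EuclideanSpace ℝ (Fin n)))
    (hC : Convex ℝ C) (x : EuclideanSpace ℝ (Fin n)) (hx : x ∈ C) :
    minFace C x =
      {u | ∃ y z : EuclideanSpace ℝ (Fin n),
        segment ℝ y z ⊆ C ∧ x ∈ openSegment ℝ y z ∧ u ∈ segment ℝ y z} := by
  set T : Set (EuclideanSpace ℝ (Fin n)) :=
    {u | u ∈ C ∧ ∃ ε : ℝ, 0 < ε ∧ x + ε • (x - u) ∈ C} with hTdef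
  have hxT : x ∈ T := ⟨hx, 1, one_pos, by simpa using hx⟩
  have hTsub : T ⊆ C := fun u hu => hu.1
  have hTconv : Convex ℝ T := by
    rintro u₁ ⟨hu₁C, ε₁, hε₁, hv₁⟩ u₂ ⟨hu₂C, ε₂, hε₂, hv₂⟩ a b ha hb hab
    obtain rfl : b = 1 - a := by linarith
    have ha1 : a ≤ 1 := by linarith
    refine ⟨hC hu₁C hu₂C ha hb hab, ?_⟩
    have hd : 0 < a * ε₂ + (1 - a) * ε₁ := by
      rcases eq_or_lt_of_le ha with h | h
      · nlinarith
      · nlinarith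
    have hcpos : 0 < a / ε₁ + (1 - a) / ε₂ := by
      have h : a / ε₁ + (1 - a) / ε₂ = (a * ε₂ + (1 - a) * ε₁) / (ε₁ * ε₂) := by
        field_simp
        try ring
      rw [h]; positivity
    have hd' : a * ε₂ + ε₁ * (1 - a) ≠ 0 := by linarith
    refine ⟨1 / (a / ε₁ + (1 - a) / ε₂), by positivity, ?_⟩
    have key : x + (1 / (a / ε₁ + (1 - a) / ε₂)) • (x - (a • u₁ + (1 - a) • u₂)) =
        ((a / ε₁) / (a / ε₁ + (1 - a) / ε₂)) • (x + ε₁ • (x - u₁))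
          + (((1 - a) / ε₂) / (a / ε₁ + (1 - a) / ε₂)) • (x + ε₂ • (x - u₂)) := by
      match_scalars <;> (field_simp; try ring; try simp)
    rw [key]
    refine hC hv₁ hv₂ (by positivity) (by positivity) ?_
    field_simp
  have hText : IsExtreme ℝ C T := by
    refine ⟨hTsub, ?_⟩
    rintro u₁ hu₁C u₂ hu₂C w ⟨hwC, ε, hε, hv⟩ ⟨a, b, ha, hb, hab, hw⟩
    obtain rfl : b = 1 - a := by linarith
    have ha1 : a < 1 := by linarith
    rw [← hw] at hv
    exact ⟨hu₁C, aux_extreme hC hu₂C ha ha1 hε hv⟩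
  have hTface : IsFace C T := ⟨hTconv, hText⟩
  apply Subset.antisymm
  · refine Subset.trans (sInter_subset_of_mem ⟨hTface, hxT⟩) ?_
    rintro u ⟨huC, ε, hε, hv⟩
    refine ⟨u, x + ε • (x - u), hC.segment_subset huC hv, ?_, left_mem_segment ℝ _ _⟩
    refine ⟨ε / (1 + ε), 1 / (1 + ε), by positivity, by positivity, ?_, ?_⟩
    · field_simp
      ring
    · match_scalars <;> (field_simp; try ring; try simp)
  · rintro u ⟨y, z, hseg, hxo, hu⟩
    intro F hF
    obtain ⟨⟨hFconv, hFext⟩, hxF⟩ := hF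
    have hy : y ∈ C := hseg (left_mem_segment ℝ _ _)
    have hz : z ∈ C := hseg (right_mem_segment ℝ _ _)
    have hyF := hFext.left_mem_of_mem_openSegment hy hz hxF hxo
    have hzF := hFext.right_mem_of_mem_openSegment hy hz hxF hxo
    exact hFconv.segment_subset hyF hzF hu
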